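/- Let q ∈ (0,1], T a positive integer, ε > 0 with ε < 2·log(1/δ) for δ ∈ (0,1), and set α = 1 + 2·log(1/δ)/ε. If σ² ≥ 7·q²·T·(ε + 2·log(1/δ))/ε², then 3.5·q²·T·α/σ² + log(1/δ)/(α − 1) ≤ ε. -/

import Mathlib

theorem stmt3 (q : ℝ) (hq : q ∈ Set.Ioc (0 : ℝ) 1) (T : ℕ) (hT : 0 < T)
    (ε δ σ2 : ℝ) (hε : 0 < ε) (hδ : δ ∈ Set.Ioo (0 : ℝ) 1)
    (hεδ : ε < 2 * Real.log (1 / δ))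
    (α : ℝ) (hα : α = 1 + 2 * Real.log (1 / δ) / ε)
    (hσ : σ2 ≥ 7 * q ^ 2 * T * (ε + 2 * Real.log (1 / δ)) / ε ^ 2) :
    3.5 * q ^ 2 * T * α / σ2 + Real.log (1 / δ) / (α - 1) ≤ ε := by
  obtain ⟨hq0, hq1⟩ := hq
  obtain ⟨hδ0, hδ1⟩ := hδ
  set L := Real.log (1 / δ) with hL
  have hL0 : 0 < L := Real.log_pos (by rw [lt_div_iff₀ hδ0]; linarith)
  have hT0 : (0 : ℝ) < T := by exact_mod_cast hT
  have hεL : 0 < ε + 2 * L := by linarith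
  have hσ0 : 0 < σ2 := lt_of_lt_of_le (by positivity) hσ
  have hα1 : α - 1 = 2 * L / ε := by rw [hα]; ring
  have h2 : L / (α - 1) = ε / 2 := by
    rw [hα1]
    field_simp
  have hαval : α = (ε + 2 * L) / ε := by
    rw [hα]; field_simp
  have h1 : 3.5 * q ^ 2 * T * α / σ2 ≤ ε / 2 := by
    rw [div_le_iff₀ hσ0, hαval, mul_div_assoc', div_le_iff₀ hε]
    have key : 7 * q ^ 2 * T * (ε + 2 * L) / ε ^ 2 ≤ σ2 := hσ
    rw [div_le_iff₀ (by positivity)] at key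
    nlinarith [key]
  linarith [h1, h2.le, h2.ge]
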